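/- Let Λ and X be complete metric spaces, let S_λ(·,·), λ ∈ Λ, be a family of processes on X, and let K ⊆ X be a compact set such that for every bounded B ⊆ X and each λ there exists t_{B,λ} with S_λ(t+s,s)B ⊆ K for all t ≥ t_{B,λ} and s ∈ ℝ. Fix t > 0 and assume the map λ ↦ S_λ(t+s,s)x is continuous, uniformly for s ∈ ℝ and x ∈ K. Then the map λ ↦ closure( ⋃_{s∈ℝ} S_λ(t+s,s)K ) is continuous from Λ into the space of nonempty closed bounded subsets of X equipped with the Hausdorff metric. -/

import Mathlib

open Filter Topology Metric Bornology

/-- A process on a metric space `X`: a two-parameter family `S t s : X → X` (`t ≥ s`)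
with `S t t = id`, `S t τ ∘ S τ s = S t s` for `t ≥ τ ≥ s`, and `(t, s, x) ↦ S t s x`
continuous on the region `s ≤ t`. -/
def IsProcess {X : Type*} [MetricSpace X] (S : ℝ → ℝ → X → X) : Prop :=
  (∀ t : ℝ, S t t = id) ∧
  (∀ t τ s : ℝ, s ≤ τ → τ ≤ t → S t τ ∘ S τ s = S t s) ∧
  ContinuousOn (fun p : ℝ × ℝ × X => S p.1 p.2.1 p.2.2) {p : ℝ × ℝ × X | p.2.1 ≤ p.1}


/-- If `K` is a compact set that uniformly absorbs every bounded set under each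
process `S_λ`, and for a fixed `t > 0` the map `λ ↦ S_λ(t+s,s)x` is continuous
uniformly for `s ∈ ℝ` and `x ∈ K`, then `λ ↦ closure (⋃ s, S_λ(t+s,s)K)` is
continuous with respect to the Hausdorff metric. -/
theorem stmt12 {Λ X : Type*} [MetricSpace Λ] [CompleteSpace Λ]
    [MetricSpace X] [CompleteSpace X]
    (S : Λ → ℝ → ℝ → X → X) (hproc : ∀ l : Λ, IsProcess (S l))
    (K : Set X) (hK : IsCompact K)
    (habs : ∀ B : Set X, Bornology.IsBounded B → ∀ l : Λ, ∃ tB : ℝ, ∀ t' ≥ tB,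
      ∀ s : ℝ, ∀ x ∈ B, S l (t' + s) s x ∈ K)
    (t : ℝ) (ht : 0 < t)
    (hunif : ∀ l₀ : Λ, ∀ ε : ℝ, 0 < ε → ∃ δ : ℝ, 0 < δ ∧
      ∀ l : Λ, dist l l₀ < δ → ∀ s : ℝ, ∀ x ∈ K,
        dist (S l (t + s) s x) (S l₀ (t + s) s x) < ε) :
    ∀ l₀ : Λ, ∀ ε : ℝ, 0 < ε → ∃ δ : ℝ, 0 < δ ∧ ∀ l : Λ, dist l l₀ < δ →
      EMetric.hausdorffEdist (closure (⋃ s : ℝ, S l (t + s) s '' K))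
        (closure (⋃ s : ℝ, S l₀ (t + s) s '' K)) < ENNReal.ofReal ε := by
  intro l₀ ε hε
  obtain ⟨δ, hδ, hδ2⟩ := hunif l₀ (ε / 2) (by linarith)
  refine ⟨δ, hδ, fun l hl => ?_⟩
  rw [EMetric.hausdorffEdist, EMetric.hausdorffEdist_closure]
  have key : EMetric.hausdorffEdist (⋃ s : ℝ, S l (t + s) s '' K)
      (⋃ s : ℝ, S l₀ (t + s) s '' K) ≤ ENNReal.ofReal (ε / 2) := by
    apply EMetric.hausdorffEdist_le_of_mem_edist
    · rintro x hx
      obtain ⟨s, ⟨k, hk, rfl⟩⟩ := Set.mem_iUnion.1 hx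
      refine ⟨S l₀ (t + s) s k, Set.mem_iUnion.2 ⟨s, ⟨k, hk, rfl⟩⟩, ?_⟩
      rw [edist_dist]
      exact ENNReal.ofReal_le_ofReal (hδ2 l hl s k hk).le
    · rintro x hx
      obtain ⟨s, ⟨k, hk, rfl⟩⟩ := Set.mem_iUnion.1 hx
      refine ⟨S l (t + s) s k, Set.mem_iUnion.2 ⟨s, ⟨k, hk, rfl⟩⟩, ?_⟩
      rw [edist_dist, dist_comm]
      exact ENNReal.ofReal_le_ofReal (hδ2 l hl s k hk).le
  refine lt_of_le_of_lt key ?_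
  exact ENNReal.ofReal_lt_ofReal_iff hε |>.2 (by linarith)
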